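/- Let δ ∈ ℕ and suppose G is δ-hyperbolic with respect to A and μ. Then the pair (G, L_geod) satisfies Property BP_ν for the function ν(k) = k + 2δ. Explicitly: if H, K ≤ G are L_geod-quasi-convex subgroups with common constant k, n ≥ 1, and g₁, …, g_n ∈ G are such that the subsets K, g₁H, …, g_nH of G are pairwise distinct and K ∩ g₁Hg₁⁻¹ ∩ … ∩ g_nHg_n⁻¹ is infinite, then there exists z ∈ G such that some element of K and some element of each coset g_iH lie at word-metric distance at most k + 2δ from z. -/

import Mathlib

open List

/-- A word over the alphabet Ã = A ∪ A⁻¹ is a `List (A × Bool)`: the letter `(a, true)`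
stands for `a` and `(a, false)` for the formal inverse `a⁻¹`. A word is *reduced* if it
has no factor `a·a⁻¹` or `a⁻¹·a`. -/
def Reduced {A : Type*} (w : List (A × Bool)) : Prop :=
  w.Chain' fun p q => ¬(p.1 = q.1 ∧ q.2 = !p.2)

variable {A : Type*} [Fintype A] {G : Type*} [Group G]

/-- Evaluation in `G` of a word over Ã, determined by the images `f a` of the letters.
This is the (inverse-respecting) monoid homomorphism μ : Ã* → G. -/
def eval (f : A → G) (w : List (A × Bool)) : G :=
  (w.map fun p => if p.2 then f p.1 else (f p.1)⁻¹).prod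

/-- Word length of `g ∈ G` with respect to the generators `A`:
the least length of a word over Ã mapping onto `g`. -/
noncomputable def wlen (f : A → G) (g : G) : ℕ :=
  sInf {n | ∃ w : List (A × Bool), eval f w = g ∧ w.length = n}

/-- A rational structure: `L` is a regular language of reduced words with μ(L) = G. -/
def RationalStructure (f : A → G) (L : Set (List (A × Bool))) : Prop :=
  Language.IsRegular (L : Language (A × Bool)) ∧ (∀ w ∈ L, Reduced w) ∧
    ∀ g : G, ∃ w ∈ L, eval f w = g

/-- `H` is L-quasi-convex with constant `k`: for every `w ∈ L` with `μ(w) ∈ H` and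
every prefix `u` of `w`, there is `h ∈ H` with `|h⁻¹ μ(u)| ≤ k`. -/
def QCW (f : A → G) (L : Set (List (A × Bool))) (H : Subgroup G) (k : ℕ) : Prop :=
  ∀ w ∈ L, eval f w ∈ H → ∀ u, u <+: w → ∃ h ∈ H, wlen f (h⁻¹ * eval f u) ≤ k

/-- The set of right cosets `H·μ(u)` where `u` ranges over prefixes of words
`w ∈ L` with `μ(w) ∈ H` (the vertex set of the Stallings graph Γ_L(H)). -/
def VL (f : A → G) (L : Set (List (A × Bool))) (H : Subgroup G) : Set (Set G) :=
  {S | ∃ w ∈ L, eval f w ∈ H ∧ ∃ u, u <+: w ∧ S = {x | ∃ h ∈ H, x = h * eval f u}}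

/-- The language of geodesic words: reduced words whose length equals the
word length of their image in G. -/
def Lgeod (f : A → G) : Set (List (A × Bool)) :=
  {w | Reduced w ∧ w.length = wlen f (eval f w)}

/-- The left coset g·H as a subset of G. -/
def lcoset (g : G) (H : Subgroup G) : Set G := {x | ∃ h ∈ H, x = g * h}

/-- The right coset H·g as a subset of G. -/
def rcoset (H : Subgroup G) (g : G) : Set G := {x | ∃ h ∈ H, x = h * g}

/-- The conjugate subgroup H^g = g⁻¹Hg. -/
def conjG {G : Type*} [Group G] (H : Subgroup G) (g : G) : Subgroup G :=
  Subgroup.map ((MulAut.conj g⁻¹).toMonoidHom) H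

/-- The double coset H·g·K as a subset of G. -/
def dcoset (H : Subgroup G) (g : G) (K : Subgroup G) : Set G :=
  {x | ∃ h ∈ H, ∃ k ∈ K, x = h * g * k}

/-- Property BP_ν: whenever H, K are L-quasi-convex subgroups with common constant k,
and K, g₁H, …, g_nH are pairwise distinct subsets of G such that
K ∩ g₁Hg₁⁻¹ ∩ … ∩ g_nHg_n⁻¹ is infinite, there exists z ∈ G such that the ball of
center z and radius ν(k) (in the word metric) meets K and each coset g_iH. -/
def BP (f : A → G) (L : Set (List (A × Bool))) (ν : ℕ → ℕ) : Prop :=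
  ∀ (H K : Subgroup G) (k : ℕ), QCW f L H k → QCW f L K k →
    ∀ n : ℕ, 1 ≤ n → ∀ g : Fin n → G,
      Function.Injective
        (Fin.cons (K : Set G) (fun i => lcoset (g i) H) : Fin (n + 1) → Set G) →
      (((K ⊓ ⨅ i, conjG H (g i)⁻¹ : Subgroup G) : Set G)).Infinite →
      ∃ z : G, (∃ w ∈ K, wlen f (z⁻¹ * w) ≤ ν k) ∧
        ∀ i, ∃ w ∈ lcoset (g i) H, wlen f (z⁻¹ * w) ≤ ν k

/-- G is δ-hyperbolic with respect to A and μ: for all g, h, k ∈ G and all geodesic words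
u, v, w with μ(u) = g⁻¹h, μ(v) = g⁻¹k, μ(w) = h⁻¹k, every prefix of the geodesic from g
to h lies within distance δ of the union of the two other geodesic sides. -/
def Hyperbolic (f : A → G) (δ : ℕ) : Prop :=
  ∀ g h k : G, ∀ u v w : List (A × Bool),
    u ∈ Lgeod f → v ∈ Lgeod f → w ∈ Lgeod f →
    eval f u = g⁻¹ * h → eval f v = g⁻¹ * k → eval f w = h⁻¹ * k →
    ∀ u', u' <+: u →
      ((∃ v', v' <+: v ∧ wlen f ((g * eval f u')⁻¹ * (g * eval f v')) ≤ δ) ∨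
       (∃ w', w' <+: w ∧ wlen f ((g * eval f u')⁻¹ * (h * eval f w')) ≤ δ))


section AuxStmt11
set_option linter.unusedSectionVars false

variable (f : A → G)

/-- `g` is representable by some word over the alphabet. -/
def EvRep (g : G) : Prop := ∃ w : List (A × Bool), eval f w = g

lemma eval_nil : eval f ([] : List (A × Bool)) = 1 := rfl

lemma eval_append (u v : List (A × Bool)) : eval f (u ++ v) = eval f u * eval f v := by
  simp [eval]

lemma eval_cons (p : A × Bool) (w : List (A × Bool)) :
    eval f (p :: w) = (if p.2 then f p.1 else (f p.1)⁻¹) * eval f w := by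
  simp [eval]

lemma evRep_one : EvRep f (1 : G) := ⟨[], rfl⟩

lemma evRep_mul {a b : G} (ha : EvRep f a) (hb : EvRep f b) : EvRep f (a * b) := by
  obtain ⟨u, hu⟩ := ha; obtain ⟨v, hv⟩ := hb
  exact ⟨u ++ v, by rw [eval_append, hu, hv]⟩

/-- Formal inverse of a word. -/
def invWord (w : List (A × Bool)) : List (A × Bool) :=
  (w.map fun p => (p.1, !p.2)).reverse

lemma invWord_length (w : List (A × Bool)) : (invWord (A := A) w).length = w.length := by
  simp [invWord]

lemma eval_invWord (w : List (A × Bool)) : eval f (invWord w) = (eval f w)⁻¹ := by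
  induction w with
  | nil => simp [invWord, eval]
  | cons p t ih =>
    have h1 : invWord (p :: t) = invWord t ++ [(p.1, !p.2)] := by simp [invWord]
    rw [h1, eval_append, ih, eval_cons f p t]
    cases hp : p.2 <;> simp [eval, mul_inv_rev]

lemma evRep_inv {g : G} (h : EvRep f g) : EvRep f g⁻¹ := by
  obtain ⟨w, hw⟩ := h
  exact ⟨invWord w, by rw [eval_invWord, hw]⟩

lemma wlen_le {g : G} {w : List (A × Bool)} (h : eval f w = g) : wlen f g ≤ w.length :=
  Nat.sInf_le ⟨w, h, rfl⟩

lemma wlen_zero {g : G} (h : ¬ EvRep f g) : wlen f g = 0 := by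
  have he : {n | ∃ w : List (A × Bool), eval f w = g ∧ w.length = n} = ∅ := by
    ext n
    simp only [Set.mem_setOf_eq, Set.mem_empty_iff_false, iff_false, not_exists]
    rintro w ⟨hw, -⟩
    exact h ⟨w, hw⟩
  rw [wlen, he, Nat.sInf_empty]

lemma not_chain'_decomp {α : Type*} {R : α → α → Prop} :
    ∀ {l : List α}, ¬ l.Chain' R → ∃ l₁ a b l₂, l = l₁ ++ a :: b :: l₂ ∧ ¬ R a b := by
  intro l
  induction l with
  | nil => intro h; exact absurd List.isChain_nil h
  | cons a t ih =>
    cases t with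
    | nil => intro h; exact absurd (List.isChain_singleton a) h
    | cons b t' =>
      intro h
      simp only [List.Chain', List.isChain_cons_cons] at h
      by_cases hab : R a b
      · have h2 : ¬ (b :: t').Chain' R := fun hc => h ⟨hab, hc⟩
        obtain ⟨l₁, x, y, l₂, heq, hxy⟩ := ih h2
        exact ⟨a :: l₁, x, y, l₂, by rw [List.cons_append, ← heq], hxy⟩
      · exact ⟨[], a, b, t', rfl, hab⟩

lemma exists_reduced : ∀ (n : ℕ) (w : List (A × Bool)), w.length ≤ n →
    ∃ w', Reduced w' ∧ eval f w' = eval f w ∧ w'.length ≤ w.length := by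
  intro n
  induction n with
  | zero =>
    intro w hw
    have : w = [] := List.length_eq_zero_iff.mp (Nat.le_zero.mp hw)
    subst this
    exact ⟨[], List.isChain_nil, rfl, le_rfl⟩
  | succ n ih =>
    intro w hw
    by_cases hr : Reduced w
    · exact ⟨w, hr, rfl, le_rfl⟩
    · obtain ⟨l₁, p, q, l₂, heq, hpq⟩ := not_chain'_decomp hr
      have hpq' : p.1 = q.1 ∧ q.2 = !p.2 := not_not.mp hpq
      have hcancel : (if p.2 then f p.1 else (f p.1)⁻¹) * (if q.2 then f q.1 else (f q.1)⁻¹) = 1 := by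
        rw [← hpq'.1, hpq'.2]
        cases p.2 <;> simp
      have hev : eval f w = eval f (l₁ ++ l₂) := by
        rw [heq, eval_append, eval_append, eval_cons, eval_cons,
          show ∀ (a b c d : G), a * (b * (c * d)) = a * (b * c * d) from fun a b c d => by group,
          hcancel, one_mul]
      have hlen : (l₁ ++ l₂).length ≤ n := by
        rw [heq] at hw
        simp only [List.length_append, List.length_cons] at hw ⊢
        omega
      obtain ⟨w', h1, h2, h3⟩ := ih (l₁ ++ l₂) hlen
      refine ⟨w', h1, by rw [h2, hev], ?_⟩
      rw [heq]
      simp only [List.length_append, List.length_cons] at h3 ⊢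
      omega

lemma exists_geodesic {x : G} (h : EvRep f x) :
    ∃ u, u ∈ Lgeod f ∧ eval f u = x ∧ u.length = wlen f x := by
  obtain ⟨w0, hw0⟩ := h
  have hne : {n | ∃ w : List (A × Bool), eval f w = x ∧ w.length = n}.Nonempty :=
    ⟨w0.length, w0, hw0, rfl⟩
  obtain ⟨w, hwx, hwl⟩ := Nat.sInf_mem hne
  obtain ⟨w', hred, hev, hle⟩ := exists_reduced f w.length w le_rfl
  have hev' : eval f w' = x := by rw [hev, hwx]
  have h1 : wlen f x ≤ w'.length := wlen_le f hev'
  have h2 : w'.length = wlen f x := le_antisymm (by rw [wlen, ← hwl]; exact hle) h1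
  exact ⟨w', ⟨hred, by rw [hev', h2]⟩, hev', h2⟩

lemma wlen_mul_le {a b : G} (ha : EvRep f a) (hb : EvRep f b) :
    wlen f (a * b) ≤ wlen f a + wlen f b := by
  obtain ⟨u, -, hu, hul⟩ := exists_geodesic f ha
  obtain ⟨v, -, hv, hvl⟩ := exists_geodesic f hb
  have : eval f (u ++ v) = a * b := by rw [eval_append, hu, hv]
  calc wlen f (a * b) ≤ (u ++ v).length := wlen_le f this
    _ = wlen f a + wlen f b := by rw [List.length_append, hul, hvl]

lemma wlen_inv (g : G) : wlen f g⁻¹ = wlen f g := by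
  have key : ∀ x : G, wlen f x⁻¹ ≤ wlen f x := by
    intro x
    by_cases hx : EvRep f x
    · obtain ⟨u, -, hu, hul⟩ := exists_geodesic f hx
      calc wlen f x⁻¹ ≤ (invWord u).length := wlen_le f (by rw [eval_invWord, hu])
        _ = wlen f x := by rw [invWord_length, hul]
    · have hx' : ¬ EvRep f x⁻¹ := fun h => hx (by simpa using evRep_inv f h)
      rw [wlen_zero f hx']
      exact Nat.zero_le _
  refine le_antisymm (key g) ?_
  have := key g⁻¹
  rwa [inv_inv] at this

lemma prefix_wlen {u u' : List (A × Bool)} (hu : u ∈ Lgeod f) (hp : u' <+: u) :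
    wlen f (eval f u') = u'.length := by
  obtain ⟨t, ht⟩ := hp
  obtain ⟨v, -, hvx, hvl⟩ := exists_geodesic f ⟨u', rfl⟩
  have h1 : wlen f (eval f u) ≤ (v ++ t).length :=
    wlen_le f (by rw [eval_append, hvx, ← eval_append, ht])
  have h2 : u.length = wlen f (eval f u) := hu.2
  have h3 : wlen f (eval f u') ≤ u'.length := wlen_le f rfl
  have h4 : u.length = u'.length + t.length := by rw [← ht, List.length_append]
  rw [List.length_append, hvl] at h1
  omega

lemma finite_ball (n : ℕ) : {x : G | EvRep f x ∧ wlen f x ≤ n}.Finite := by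
  have hsub : {x : G | EvRep f x ∧ wlen f x ≤ n} ⊆
      (fun w => eval f w) '' {w : List (A × Bool) | w.length ≤ n} := by
    rintro x ⟨hr, hle⟩
    obtain ⟨u, -, hux, hul⟩ := exists_geodesic f hr
    exact ⟨u, by rw [Set.mem_setOf_eq, hul]; exact hle, hux⟩
  exact ((List.finite_length_le (A × Bool) n).image _).subset hsub

end AuxStmt11

/-- if G is δ-hyperbolic then (G, L_geod) satisfies Property BP_ν for
ν(k) = k + 2δ: if H, K are quasi-convex with common constant k, and K, g₁H, …, g_nH are
pairwise distinct with K ∩ g₁Hg₁⁻¹ ∩ … ∩ g_nHg_n⁻¹ infinite, then some z ∈ G lies at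
word-metric distance at most k + 2δ from K and from each coset g_iH. -/
theorem stmt11 (f : A → G) (δ : ℕ) (hδ : Hyperbolic f δ) :
    BP f (Lgeod f) (fun k => k + 2 * δ) := by
  intro H K k hH hK n hn g hinj hinf
  classical
  -- extract membership information from the infinite intersection
  have hmem : ∀ x ∈ ((K ⊓ ⨅ i, conjG H (g i)⁻¹ : Subgroup G) : Set G),
      x ∈ K ∧ ∀ i, (g i)⁻¹ * x * g i ∈ H := by
    intro x hx
    rw [SetLike.mem_coe, Subgroup.mem_inf] at hx
    obtain ⟨hxK, hxi⟩ := hx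
    refine ⟨hxK, fun i => ?_⟩
    have h1 := Subgroup.mem_iInf.mp hxi i
    rw [conjG, Subgroup.mem_map] at h1
    obtain ⟨h, hh, hhx⟩ := h1
    have h2 : g i * h * (g i)⁻¹ = x := by
      simpa [MulAut.conj_apply] using hhx
    have h3 : (g i)⁻¹ * x * g i = h := by rw [← h2]; group
    rw [h3]; exact hh
  by_cases hcase : ∃ x ∈ ((K ⊓ ⨅ i, conjG H (g i)⁻¹ : Subgroup G) : Set G), ¬ EvRep f x
  · -- an unrepresentable element in the intersection: z = 1 works trivially
    obtain ⟨x, hxI, hxR⟩ := hcase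
    obtain ⟨hxK, hxH⟩ := hmem x hxI
    refine ⟨1, ⟨x, hxK, ?_⟩, fun i => ?_⟩
    · have : ¬ EvRep f ((1 : G)⁻¹ * x) := by rwa [inv_one, one_mul]
      rw [wlen_zero f this]; exact Nat.zero_le _
    · by_cases hgi : EvRep f (g i)
      · refine ⟨x * g i, ⟨(g i)⁻¹ * x * g i, hxH i, by group⟩, ?_⟩
        have hnr : ¬ EvRep f ((1 : G)⁻¹ * (x * g i)) := by
          rw [inv_one, one_mul]
          intro hr
          have := evRep_mul f hr (evRep_inv f hgi)
          rw [show x * g i * (g i)⁻¹ = x by group] at this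
          exact hxR this
        rw [wlen_zero f hnr]; exact Nat.zero_le _
      · refine ⟨g i, ⟨1, H.one_mem, (mul_one _).symm⟩, ?_⟩
        have hnr : ¬ EvRep f ((1 : G)⁻¹ * g i) := by rwa [inv_one, one_mul]
        rw [wlen_zero f hnr]; exact Nat.zero_le _
  · -- all elements of the intersection are representable
    push_neg at hcase
    set C := Finset.univ.sup (fun i : Fin n => wlen f (g i)) with hC
    -- pick x in the intersection with large word length
    obtain ⟨x, hxI, hxN⟩ : ∃ x ∈ ((K ⊓ ⨅ i, conjG H (g i)⁻¹ : Subgroup G) : Set G),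
        2 * (C + k + 2 * δ + 2) < wlen f x := by
      by_contra hcon
      push_neg at hcon
      exact hinf ((finite_ball f (2 * (C + k + 2 * δ + 2))).subset
        (fun y hy => ⟨hcase y hy, hcon y hy⟩))
    obtain ⟨hxK, hxH⟩ := hmem x hxI
    have hxR : EvRep f x := hcase x hxI
    obtain ⟨u, huL, hux, hul⟩ := exists_geodesic f hxR
    set m := wlen f x / 2 with hm
    have hmle : m ≤ u.length := by rw [hul]; omega
    set u' := u.take m with hu'
    have hpre : u' <+: u := List.take_prefix m u
    set z := eval f u' with hz
    have hzR : EvRep f z := ⟨u', rfl⟩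
    have hzlen : wlen f z = m := by
      rw [hz, prefix_wlen f huL hpre, hu', List.length_take]
      omega
    have hmbig : C + k + 2 * δ + 2 ≤ m := by omega
    -- the suffix of the geodesic evaluates to z⁻¹ * x
    have hsuffR : EvRep f (z⁻¹ * x) := by
      refine ⟨u.drop m, ?_⟩
      have h1 := eval_append f (u.take m) (u.drop m)
      rw [List.take_append_drop, hux] at h1
      rw [show eval f (u.take m) = z from by rw [hz, hu']] at h1
      rw [h1]; group
    have hzx : wlen f x - m ≤ wlen f (z⁻¹ * x) := by
      have h1 := wlen_mul_le f hzR hsuffR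
      rw [mul_inv_cancel_left] at h1
      omega
    refine ⟨z, ?_, fun i => ?_⟩
    · -- K part: quasi-convexity of K along u
      obtain ⟨h, hhK, hhk⟩ := hK u huL (by rw [hux]; exact hxK) u' hpre
      refine ⟨h, hhK, ?_⟩
      have he : wlen f (z⁻¹ * h) = wlen f (h⁻¹ * eval f u') := by
        rw [← wlen_inv f (h⁻¹ * eval f u'), mul_inv_rev, inv_inv, ← hz]
      show wlen f (z⁻¹ * h) ≤ k + 2 * δ
      rw [he]
      exact le_trans hhk (Nat.le_add_right k (2 * δ))
    · -- coset parts
      by_cases hgi : EvRep f (g i)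
      · -- representable gᵢ: the hyperbolic thin-quadrilateral argument
        have hgiC : wlen f (g i) ≤ C := by
          rw [hC]
          exact Finset.le_sup (f := fun i : Fin n => wlen f (g i)) (Finset.mem_univ i)
        have hhi : (g i)⁻¹ * x * g i ∈ H := hxH i
        have hxg : EvRep f (x * g i) := evRep_mul f hxR hgi
        obtain ⟨v, hvL, hvx, hvl⟩ := exists_geodesic f hxg
        obtain ⟨wg, hwgL, hwgx, hwgl⟩ := exists_geodesic f hgi
        -- Step 1: triangle (1, x, x·gᵢ) at the prefix u'
        have step1 := hδ 1 x (x * g i) u v wg huL hvL hwgL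
          (by rw [hux]; group) (by rw [hvx]; group) (by rw [hwgx]; group) u' hpre
        rcases step1 with ⟨v', hv'p, hv'd⟩ | ⟨w', hw'p, hw'd⟩
        · -- main case: u' is δ-close to a point p on the geodesic [1, x·gᵢ]
          set p := eval f v' with hp
          simp only [one_mul, ← hz, ← hp] at hv'd
          have hpR : EvRep f p := ⟨v', rfl⟩
          have hpw : wlen f p = v'.length := by rw [hp, prefix_wlen f hvL hv'p]
          -- geodesic for (x·gᵢ)⁻¹·gᵢ
          have hhiR : EvRep f ((x * g i)⁻¹ * g i) := by
            rw [show (x * g i)⁻¹ * g i = (g i)⁻¹ * x⁻¹ * g i by group]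
            exact evRep_mul f (evRep_mul f (evRep_inv f hgi) (evRep_inv f hxR)) hgi
          obtain ⟨wh, hwhL, hwhx, hwhl⟩ := exists_geodesic f hhiR
          -- Step 2: triangle (1, x·gᵢ, gᵢ) at the prefix v'
          have step2 := hδ 1 (x * g i) (g i) v wg wh hvL hwgL hwhL
            (by rw [hvx]; group) (by rw [hwgx]; group) (by rw [hwhx]) v' hv'p
          rcases step2 with ⟨t, htp, htd⟩ | ⟨w', hw'p, hw'd⟩
          · -- p close to the short side [1, gᵢ]: impossible since p is far from 1
            exfalso
            simp only [one_mul, ← hp] at htd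
            have htR : EvRep f (eval f t) := ⟨t, rfl⟩
            have h1 : wlen f p ≤ wlen f (eval f t) + wlen f (p⁻¹ * eval f t) := by
              have h2 := wlen_mul_le f htR (evRep_mul f (evRep_inv f htR) hpR)
              rw [show eval f t * ((eval f t)⁻¹ * p) = p by group] at h2
              rw [show (eval f t)⁻¹ * p = (p⁻¹ * eval f t)⁻¹ by group, wlen_inv] at h2
              exact h2
            have h2 : wlen f (eval f t) ≤ C := by
              rw [prefix_wlen f hwgL htp]
              calc t.length ≤ wg.length := htp.length_le
                _ = wlen f (g i) := hwgl
                _ ≤ C := hgiC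
            have h3 : wlen f z ≤ wlen f p + wlen f (z⁻¹ * p) := by
              have h4 := wlen_mul_le f hpR (evRep_mul f (evRep_inv f hpR) hzR)
              rw [show p * (p⁻¹ * z) = z by group] at h4
              rw [show p⁻¹ * z = (z⁻¹ * p)⁻¹ by group, wlen_inv] at h4
              exact h4
            omega
          · -- p is δ-close to x·gᵢ·(prefix of geodesic in H-direction)
            simp only [one_mul, ← hp] at hw'd
            have hwhH : eval f wh ∈ H := by
              rw [hwhx, show (x * g i)⁻¹ * g i = ((g i)⁻¹ * x * g i)⁻¹ by group]
              exact H.inv_mem hhi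
            obtain ⟨h, hhH, hhk⟩ := hH wh hwhL hwhH w' hw'p
            refine ⟨x * g i * h, ⟨((g i)⁻¹ * x * g i) * h, H.mul_mem hhi hhH, by group⟩, ?_⟩
            by_cases hhR : EvRep f h
            · have ha : EvRep f (z⁻¹ * p) := evRep_mul f (evRep_inv f hzR) hpR
              have hw'R : EvRep f (eval f w') := ⟨w', rfl⟩
              have hb : EvRep f (p⁻¹ * (x * g i * eval f w')) :=
                evRep_mul f (evRep_inv f hpR)
                  (evRep_mul f (evRep_mul f hxR hgi) hw'R)
              have hc : EvRep f ((eval f w')⁻¹ * h) :=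
                evRep_mul f (evRep_inv f hw'R) hhR
              have hcl : wlen f ((eval f w')⁻¹ * h) ≤ k := by
                rw [show (eval f w')⁻¹ * h = (h⁻¹ * eval f w')⁻¹ by group, wlen_inv]
                exact hhk
              have e : z⁻¹ * (x * g i * h) =
                  (z⁻¹ * p) * ((p⁻¹ * (x * g i * eval f w')) * ((eval f w')⁻¹ * h)) := by
                group
              calc wlen f (z⁻¹ * (x * g i * h))
                  ≤ wlen f (z⁻¹ * p) + wlen f ((p⁻¹ * (x * g i * eval f w')) *
                      ((eval f w')⁻¹ * h)) := by
                    rw [e]; exact wlen_mul_le f ha (evRep_mul f hb hc)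
                _ ≤ wlen f (z⁻¹ * p) + (wlen f (p⁻¹ * (x * g i * eval f w')) +
                      wlen f ((eval f w')⁻¹ * h)) := by
                    have := wlen_mul_le f hb hc; omega
                _ ≤ k + 2 * δ := by
                    have h1 : wlen f (p⁻¹ * (x * g i * eval f w')) ≤ δ := by
                      have := hw'd
                      rwa [show p⁻¹ * (x * g i * eval f w') = p⁻¹ * (x * g i * eval f w')
                        from rfl]
                    omega
            · have hnr : ¬ EvRep f (z⁻¹ * (x * g i * h)) := by
                intro hr
                have h1 := evRep_mul f
                  (evRep_mul f (evRep_inv f hgi) (evRep_mul f (evRep_inv f hxR) hzR)) hr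
                rw [show (g i)⁻¹ * (x⁻¹ * z) * (z⁻¹ * (x * g i * h)) = h by group] at h1
                exact hhR h1
              rw [wlen_zero f hnr]; exact Nat.zero_le _
        · -- u' close to the short side [x, x·gᵢ]: impossible since u' is far from x
          exfalso
          simp only [one_mul, ← hz] at hw'd
          have hw'R : EvRep f (eval f w') := ⟨w', rfl⟩
          have h1 : wlen f (z⁻¹ * x) ≤ wlen f (z⁻¹ * (x * eval f w')) + wlen f (eval f w') := by
            have h2 := wlen_mul_le f (evRep_mul f (evRep_inv f hzR)
              (evRep_mul f hxR hw'R)) (evRep_inv f hw'R)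
            rw [show z⁻¹ * (x * eval f w') * (eval f w')⁻¹ = z⁻¹ * x by group,
              wlen_inv] at h2
            exact h2
          have h2 : wlen f (eval f w') ≤ C := by
            rw [prefix_wlen f hwgL hw'p]
            calc w'.length ≤ wg.length := hw'p.length_le
              _ = wlen f (g i) := hwgl
              _ ≤ C := hgiC
          omega
      · -- unrepresentable gᵢ: x·gᵢ works trivially
        refine ⟨x * g i, ⟨(g i)⁻¹ * x * g i, hxH i, by group⟩, ?_⟩
        have hnr : ¬ EvRep f (z⁻¹ * (x * g i)) := by
          intro hr
          have h1 := evRep_mul f (evRep_mul f (evRep_inv f hxR) hzR) hr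
          rw [show x⁻¹ * z * (z⁻¹ * (x * g i)) = g i by group] at h1
          exact hgi h1
        rw [wlen_zero f hnr]; exact Nat.zero_le _
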